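/- Fix n ∈ ℕ with n ≥ 1 and real parameters a, b, α, β with (a−b+1|q)_n (2a−β+1|q)_n (a−b−α+1|q)_n ≠ 0. Then for every real s: ũ_n^{α,β}(x(s+1),a,b)_q − ũ_n^{α,β}(x(s),a,b)_q = −[2s+2]_q [2b−2a+α+β−n−1]_q · ũ_{n−1}^{α,β}(x(s+1/2), a+1/2, b−1/2)_q. -/

import Mathlib

open Finset

/-- The symmetric q-number `[s]_q = (q^{s/2} - q^{-s/2})/(q^{1/2} - q^{-1/2})`. -/
noncomputable def qnum (q s : ℝ) : ℝ :=
  (q ^ (s / 2) - q ^ (-s / 2)) / (q ^ ((1 : ℝ) / 2) - q ^ (-(1 : ℝ) / 2))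

/-- The symmetric q-factorial `[n]_q! = ∏_{m=1}^n [m]_q`. -/
noncomputable def qfact (q : ℝ) (n : ℕ) : ℝ :=
  ∏ m ∈ Finset.range n, qnum q ((m : ℝ) + 1)

/-- The symmetric q-Pochhammer symbol `(a|q)_k = ∏_{m=0}^{k-1} [a+m]_q`. -/
noncomputable def qpoch (q a : ℝ) (k : ℕ) : ℝ :=
  ∏ m ∈ Finset.range k, qnum q (a + (m : ℝ))

/-- The q-Racah polynomial `u_n^{α,β}(x(s),a,b)_q` on the lattice `x(s)=[s]_q[s+1]_q`. -/
noncomputable def racahU (q a b α β : ℝ) (n : ℕ) (s : ℝ) : ℝ :=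
  qpoch q (a - b + 1) n * qpoch q (β + 1) n * qpoch q (a + b + α + 1) n / qfact q n *
    ∑ k ∈ Finset.range (n + 1),
      qpoch q (-(n : ℝ)) k * qpoch q (α + β + (n : ℝ) + 1) k * qpoch q (a - s) k *
          qpoch q (a + s + 1) k /
        (qpoch q 1 k * qpoch q (a - b + 1) k * qpoch q (β + 1) k *
          qpoch q (a + b + α + 1) k)

/-- The alternative q-Racah polynomial `ũ_n^{α,β}(x(s),a,b)_q`. -/
noncomputable def racahUt (q a b α β : ℝ) (n : ℕ) (s : ℝ) : ℝ :=
  qpoch q (a - b + 1) n * qpoch q (2 * a - β + 1) n * qpoch q (a - b - α + 1) n / qfact q n *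
    ∑ k ∈ Finset.range (n + 1),
      qpoch q (-(n : ℝ)) k * qpoch q (2 * a - 2 * b - α - β + (n : ℝ) + 1) k *
          qpoch q (a - s) k * qpoch q (a + s + 1) k /
        (qpoch q 1 k * qpoch q (a - b + 1) k * qpoch q (2 * a - β + 1) k *
          qpoch q (a - b - α + 1) k)

/-- `σ(s) = [s-a]_q [s+b]_q [s+a-β]_q [b+α-s]_q`. -/
noncomputable def racahSigma (q a b α β s : ℝ) : ℝ :=
  qnum q (s - a) * qnum q (s + b) * qnum q (s + a - β) * qnum q (b + α - s)

/-- `σ(-s-1) = [s+a+1]_q [b-s-1]_q [s-a+β+1]_q [b+α+s+1]_q`. -/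
noncomputable def racahSigmaM (q a b α β s : ℝ) : ℝ :=
  qnum q (s + a + 1) * qnum q (b - s - 1) * qnum q (s - a + β + 1) * qnum q (b + α + s + 1)

/-- `σ̃(s) = [s-a]_q [s+b]_q [s-a+β]_q [b+α+s]_q`. -/
noncomputable def racahSigmaT (q a b α β s : ℝ) : ℝ :=
  qnum q (s - a) * qnum q (s + b) * qnum q (s - a + β) * qnum q (b + α + s)

/-- `σ̃(-s-1) = [s+a+1]_q [b-s-1]_q [s+a-β+1]_q [b+α-s-1]_q`. -/
noncomputable def racahSigmaTM (q a b α β s : ℝ) : ℝ :=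
  qnum q (s + a + 1) * qnum q (b - s - 1) * qnum q (s + a - β + 1) * qnum q (b + α - s - 1)

/-- `τ_n(s)` for the q-Racah polynomials. -/
noncomputable def racahTau (q a b α β : ℝ) (n : ℕ) (s : ℝ) : ℝ :=
  -qnum q (α + β + 2 * (n : ℝ) + 2) * qnum q (s + (n : ℝ) / 2) * qnum q (s + (n : ℝ) / 2 + 1) +
    qnum q (a + (n : ℝ) / 2 + 1) * qnum q (b - (n : ℝ) / 2 - 1) *
      qnum q (β + (n : ℝ) / 2 + 1 - a) * qnum q (b + α + (n : ℝ) / 2 + 1) -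
    qnum q (a + (n : ℝ) / 2) * qnum q (b - (n : ℝ) / 2) * qnum q (β + (n : ℝ) / 2 - a) *
      qnum q (b + α + (n : ℝ) / 2)

noncomputable def qE (q t : ℝ) : ℝ := q ^ (t / 2)

lemma qE_ne {q : ℝ} (hq0 : 0 < q) (t : ℝ) : qE q t ≠ 0 := (Real.rpow_pos_of_pos hq0 _).ne'

lemma qE_add {q : ℝ} (hq0 : 0 < q) (x y : ℝ) : qE q (x + y) = qE q x * qE q y := by
  rw [qE, qE, qE, show (x+y)/2 = x/2 + y/2 by ring, Real.rpow_add hq0]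

lemma qE_neg {q : ℝ} (hq0 : 0 < q) (x : ℝ) : qE q (-x) = (qE q x)⁻¹ := by
  rw [qE, qE, show -x/2 = -(x/2) by ring, Real.rpow_neg hq0.le]

lemma qE_sq {q : ℝ} (hq0 : 0 < q) (x : ℝ) : qE q x * qE q x = q ^ x := by
  rw [qE, ← Real.rpow_add hq0]; ring_nf

lemma qnum_eq {q : ℝ} (hq0 : 0 < q) (s : ℝ) :
    qnum q s = (qE q s - (qE q s)⁻¹) / (qE q 1 - (qE q 1)⁻¹) := by
  rw [qnum, ← qE_neg hq0, ← qE_neg hq0, qE, qE, qE, qE]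

lemma qE_one_sub_ne {q : ℝ} (hq0 : 0 < q) (hq1 : q ≠ 1) : qE q 1 - (qE q 1)⁻¹ ≠ 0 := by
  intro h
  have h1 : qE q 1 = (qE q 1)⁻¹ := by linarith [sub_eq_zero.mp h]
  have h2 := qE_sq hq0 1
  rw [Real.rpow_one] at h2
  apply hq1
  have h3 : qE q 1 * qE q 1 = 1 := by
    nth_rewrite 2 [h1]
    exact mul_inv_cancel₀ (qE_ne hq0 1)
  rw [h2] at h3; exact h3

lemma qnum_ne_zero {q : ℝ} (hq0 : 0 < q) (hq1 : q ≠ 1) {t : ℝ} (ht : t ≠ 0) : qnum q t ≠ 0 := by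
  rw [qnum_eq hq0]
  apply div_ne_zero _ (qE_one_sub_ne hq0 hq1)
  intro h
  have h1 : qE q t = (qE q t)⁻¹ := by linarith [sub_eq_zero.mp h]
  have h2 := qE_sq hq0 t
  have h3 : qE q t * qE q t = 1 := by
    nth_rewrite 2 [h1]
    exact mul_inv_cancel₀ (qE_ne hq0 t)
  rw [h2] at h3
  have h4 := Real.log_rpow hq0 t
  rw [h3, Real.log_one] at h4
  rcases mul_eq_zero.mp h4.symm with h | h
  · exact ht h
  · rcases Real.log_eq_zero.mp h with h' | h' | h' <;> [linarith; exact hq1 h'; linarith]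

lemma qnum_neg {q : ℝ} (hq0 : 0 < q) (t : ℝ) : qnum q (-t) = -qnum q t := by
  rw [qnum_eq hq0, qnum_eq hq0, qE_neg hq0, inv_inv, ← neg_div]
  ring

/-- `[x][y] - [x+z][y-z] = [z][x-y+z]`. -/
lemma qnum_mul_sub {q : ℝ} (hq0 : 0 < q) (hq1 : q ≠ 1) (x y z : ℝ) :
    qnum q x * qnum q y - qnum q (x + z) * qnum q (y - z) = qnum q z * qnum q (x - y + z) := by
  have hx := qE_ne hq0 x
  have hy := qE_ne hq0 y
  have hz := qE_ne hq0 z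
  have hd := qE_one_sub_ne hq0 hq1
  rw [qnum_eq hq0, qnum_eq hq0, qnum_eq hq0, qnum_eq hq0, qnum_eq hq0, qnum_eq hq0,
    qE_add hq0 x z, show y - z = y + -z by ring, qE_add hq0 y (-z), qE_neg hq0,
    show x - y + z = x + -y + z by ring, qE_add hq0 (x + -y) z, qE_add hq0 x (-y),
    qE_neg hq0]
  rw [div_mul_div_comm, div_mul_div_comm, div_mul_div_comm, ← sub_div]
  congr 1
  field_simp
  ring

lemma qpoch_zero (q a : ℝ) : qpoch q a 0 = 1 := by simp [qpoch]

lemma qpoch_succ_back (q a : ℝ) (k : ℕ) :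
    qpoch q a (k + 1) = qpoch q a k * qnum q (a + k) := Finset.prod_range_succ _ _

lemma qpoch_succ_front (q a : ℝ) (k : ℕ) :
    qpoch q a (k + 1) = qnum q a * qpoch q (a + 1) k := by
  rw [qpoch, Finset.prod_range_succ']
  simp only [Nat.cast_zero, add_zero, Nat.cast_add, Nat.cast_one]
  rw [mul_comm, qpoch]
  exact congrArg _ (Finset.prod_congr rfl fun i _ => by ring_nf)

lemma qpoch_prefix_ne {q a : ℝ} {k : ℕ} (h : qpoch q a k ≠ 0) {j : ℕ} (hj : j ≤ k) :
    qpoch q a j ≠ 0 := by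
  rw [qpoch, Finset.prod_ne_zero_iff] at h ⊢
  exact fun m hm => h m (Finset.mem_range.mpr (lt_of_lt_of_le (Finset.mem_range.mp hm) hj))

lemma qpoch_front_ne {q a : ℝ} {k : ℕ} (h : qpoch q a (k + 1) ≠ 0) :
    qnum q a ≠ 0 ∧ qpoch q (a + 1) k ≠ 0 := by
  rw [qpoch_succ_front] at h
  exact ⟨left_ne_zero_of_mul h, right_ne_zero_of_mul h⟩

lemma qfact_succ (q : ℝ) (m : ℕ) : qfact q (m + 1) = qfact q m * qnum q ((m : ℝ) + 1) :=
  Finset.prod_range_succ _ _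

lemma qfact_ne_zero {q : ℝ} (hq0 : 0 < q) (hq1 : q ≠ 1) (n : ℕ) : qfact q n ≠ 0 :=
  Finset.prod_ne_zero_iff.mpr fun i _ => qnum_ne_zero hq0 hq1 (by positivity)

lemma qpoch_one_ne_zero {q : ℝ} (hq0 : 0 < q) (hq1 : q ≠ 1) (n : ℕ) : qpoch q 1 n ≠ 0 :=
  Finset.prod_ne_zero_iff.mpr fun i _ => qnum_ne_zero hq0 hq1 (by positivity)

lemma poch_S_diff {q : ℝ} (hq0 : 0 < q) (hq1 : q ≠ 1) (a s : ℝ) (j : ℕ) :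
    qpoch q (a - s - 1) (j+1) * qpoch q (a + s + 2) (j+1)
      - qpoch q (a - s) (j+1) * qpoch q (a + s + 1) (j+1)
    = -(qnum q ((j:ℝ)+1) * qnum q (2*s+2)) * (qpoch q (a - s) j * qpoch q (a + s + 2) j) := by
  rw [qpoch_succ_front q (a - s - 1) j, show a - s - 1 + 1 = a - s by ring,
      qpoch_succ_back q (a + s + 2) j,
      qpoch_succ_back q (a - s) j,
      qpoch_succ_front q (a + s + 1) j, show a + s + 1 + 1 = a + s + 2 by ring]
  have key := qnum_mul_sub hq0 hq1 (a - s - 1) (a + s + 2 + j) ((j:ℝ)+1)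
  rw [show a - s - 1 + ((j:ℝ)+1) = a - s + j by ring,
      show a + s + 2 + (j:ℝ) - ((j:ℝ)+1) = a + s + 1 by ring,
      show a - s - 1 - (a + s + 2 + (j:ℝ)) + ((j:ℝ)+1) = -(2*s+2) by ring,
      qnum_neg hq0] at key
  linear_combination (qpoch q (a - s) j * qpoch q (a + s + 2) j) * key

set_option maxHeartbeats 1000000 in
lemma term_eq {q : ℝ} (hq0 : 0 < q) (hq1 : q ≠ 1) (m j : ℕ) (a b α β s : ℝ)
    (hAB : qnum q (a-b+1) ≠ 0) (hB2 : qnum q (2*a-β+1) ≠ 0) (hBA : qnum q (a-b-α+1) ≠ 0)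
    (hpAB : qpoch q (a-b+1+1) j ≠ 0) (hpB2 : qpoch q (2*a-β+1+1) j ≠ 0)
    (hpBA : qpoch q (a-b-α+1+1) j ≠ 0)
    (hp1 : qpoch q 1 j ≠ 0) (hfm : qfact q m ≠ 0) :
    qpoch q (a-b+1) (m+1) * qpoch q (2*a-β+1) (m+1) * qpoch q (a-b-α+1) (m+1) / qfact q (m+1) *
      (qpoch q (-((m:ℝ)+1)) (j+1) * qpoch q (2*a-2*b-α-β+((m:ℝ)+1)+1) (j+1) *
          qpoch q (a-s-1) (j+1) * qpoch q (a+s+2) (j+1) /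
        (qpoch q 1 (j+1) * qpoch q (a-b+1) (j+1) * qpoch q (2*a-β+1) (j+1) *
          qpoch q (a-b-α+1) (j+1))
      - qpoch q (-((m:ℝ)+1)) (j+1) * qpoch q (2*a-2*b-α-β+((m:ℝ)+1)+1) (j+1) *
          qpoch q (a-s) (j+1) * qpoch q (a+s+1) (j+1) /
        (qpoch q 1 (j+1) * qpoch q (a-b+1) (j+1) * qpoch q (2*a-β+1) (j+1) *
          qpoch q (a-b-α+1) (j+1)))
    = -(qnum q (2*s+2) * qnum q (2*b-2*a+α+β-((m:ℝ)+1)-1)) *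
      (qpoch q (a-b+1+1) m * qpoch q (2*a-β+1+1) m * qpoch q (a-b-α+1+1) m / qfact q m *
        (qpoch q (-(m:ℝ)) j * qpoch q (2*a-2*b-α-β+((m:ℝ)+1)+1+1) j *
            qpoch q (a-s) j * qpoch q (a+s+2) j /
          (qpoch q 1 j * qpoch q (a-b+1+1) j * qpoch q (2*a-β+1+1) j *
            qpoch q (a-b-α+1+1) j))) := by
  have hj1 : qnum q ((j:ℝ)+1) ≠ 0 := qnum_ne_zero hq0 hq1 (by positivity)
  have hm1 : qnum q ((m:ℝ)+1) ≠ 0 := qnum_ne_zero hq0 hq1 (by positivity)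
  rw [div_sub_div_same]
  have hs := poch_S_diff hq0 hq1 a s j
  rw [show qpoch q (-((m:ℝ)+1)) (j+1) * qpoch q (2*a-2*b-α-β+((m:ℝ)+1)+1) (j+1) *
          qpoch q (a-s-1) (j+1) * qpoch q (a+s+2) (j+1)
      - qpoch q (-((m:ℝ)+1)) (j+1) * qpoch q (2*a-2*b-α-β+((m:ℝ)+1)+1) (j+1) *
          qpoch q (a-s) (j+1) * qpoch q (a+s+1) (j+1)
      = qpoch q (-((m:ℝ)+1)) (j+1) * qpoch q (2*a-2*b-α-β+((m:ℝ)+1)+1) (j+1) *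
          (-(qnum q ((j:ℝ)+1) * qnum q (2*s+2)) *
            (qpoch q (a - s) j * qpoch q (a + s + 2) j))
      from by linear_combination (qpoch q (-((m:ℝ)+1)) (j+1) *
        qpoch q (2*a-2*b-α-β+((m:ℝ)+1)+1) (j+1)) * hs]
  rw [qpoch_succ_front q (-((m:ℝ)+1)) j, show -((m:ℝ)+1) = -((m:ℝ)+1) from rfl,
      qnum_neg hq0 ((m:ℝ)+1), show -((m:ℝ)+1) + 1 = -(m:ℝ) by ring,
      qpoch_succ_front q (2*a-2*b-α-β+((m:ℝ)+1)+1) j,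
      show 2*a-2*b-α-β+((m:ℝ)+1)+1 = -(2*b-2*a+α+β-((m:ℝ)+1)-1) by ring,
      qnum_neg hq0 (2*b-2*a+α+β-((m:ℝ)+1)-1),
      show -(2*b-2*a+α+β-((m:ℝ)+1)-1) + 1 = 2*a-2*b-α-β+((m:ℝ)+1)+1+1 by ring,
      qpoch_succ_back q 1 j, show (1:ℝ) + (j:ℝ) = (j:ℝ) + 1 by ring,
      qpoch_succ_front q (a-b+1) j, qpoch_succ_front q (2*a-β+1) j,
      qpoch_succ_front q (a-b-α+1) j,
      qpoch_succ_front q (a-b+1) m, qpoch_succ_front q (2*a-β+1) m,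
      qpoch_succ_front q (a-b-α+1) m,
      qfact_succ q m]
  have hB2' : qnum q (a*2-β+1) ≠ 0 := by rwa [mul_comm] at hB2
  have hpB2' : qpoch q (a*2-β+1+1) j ≠ 0 := by rwa [mul_comm] at hpB2
  field_simp

theorem stmt_15 (q : ℝ) (hq0 : 0 < q) (hq1 : q ≠ 1) (n : ℕ) (hn : 1 ≤ n) (a b α β : ℝ)
    (hnz : qpoch q (a - b + 1) n * qpoch q (2 * a - β + 1) n *
      qpoch q (a - b - α + 1) n ≠ 0) :
    ∀ s : ℝ,
      racahUt q a b α β n (s + 1) - racahUt q a b α β n s =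
        -(qnum q (2 * s + 2) * qnum q (2 * b - 2 * a + α + β - (n : ℝ) - 1)) *
          racahUt q (a + 1 / 2) (b - 1 / 2) α β (n - 1) (s + 1 / 2) := by
  intro s
  obtain ⟨m, rfl⟩ : ∃ m, n = m + 1 := ⟨n - 1, (Nat.succ_pred_eq_of_pos hn).symm⟩
  obtain ⟨h12, h3⟩ := mul_ne_zero_iff.mp hnz
  obtain ⟨h1, h2⟩ := mul_ne_zero_iff.mp h12
  obtain ⟨hAB, hpABm⟩ := qpoch_front_ne h1
  obtain ⟨hB2, hpB2m⟩ := qpoch_front_ne h2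
  obtain ⟨hBA, hpBAm⟩ := qpoch_front_ne h3
  have hfm : qfact q m ≠ 0 := qfact_ne_zero hq0 hq1 m
  simp only [racahUt, Nat.add_sub_cancel]
  rw [← mul_sub, ← Finset.sum_sub_distrib, Finset.sum_range_succ']
  simp only [qpoch_zero, one_mul, mul_one, div_one, sub_self, add_zero]
  rw [Finset.mul_sum, Finset.mul_sum, Finset.mul_sum]
  refine Finset.sum_congr rfl fun j hj => ?_
  have hjm : j ≤ m := Nat.lt_succ_iff.mp (Finset.mem_range.mp hj)
  have key := term_eq hq0 hq1 m j a b α β s hAB hB2 hBA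
    (qpoch_prefix_ne hpABm hjm) (qpoch_prefix_ne hpB2m hjm) (qpoch_prefix_ne hpBAm hjm)
    (qpoch_one_ne_zero hq0 hq1 j) hfm
  push_cast at key ⊢
  ring_nf at key ⊢
  exact key
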